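/- Let E be a real Banach space, T > 0, α ∈ (0,1), c ≥ 0, and let Φ : C([0,T];E) → C([0,T];E) satisfy the singular Volterra estimate ‖Φ(ζ₁)(t) − Φ(ζ₂)(t)‖_E ≤ c ∫₀ᵗ (t−s)^{−α} sup_{0≤τ≤s} ‖ζ₁(τ) − ζ₂(τ)‖_E ds for all ζ₁, ζ₂ ∈ C([0,T];E) and all t ∈ [0,T]. Then Φ has exactly one fixed point in C([0,T];E). -/

import Mathlib

open Set MeasureTheory

/-- An operator `Φ` on `C([0,T];E)` satisfying a singular Volterra-type estimate
`‖Φ(ζ₁)(t) − Φ(ζ₂)(t)‖ ≤ c ∫₀ᵗ (t−s)^{−α} sup_{0≤τ≤s} ‖ζ₁(τ)−ζ₂(τ)‖ ds`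
has exactly one fixed point in `C([0,T];E)`. -/
theorem volterra_fixed_point {E : Type*}
    [NormedAddCommGroup E] [NormedSpace ℝ E] [CompleteSpace E]
    (T α c : ℝ) (hT : 0 < T) (hα : α ∈ Set.Ioo (0 : ℝ) 1) (hc : 0 ≤ c)
    (Φ : C(Set.Icc (0 : ℝ) T, E) → C(Set.Icc (0 : ℝ) T, E))
    (hΦ : ∀ ζ₁ ζ₂ : C(Set.Icc (0 : ℝ) T, E), ∀ t : Set.Icc (0 : ℝ) T,
      ‖Φ ζ₁ t - Φ ζ₂ t‖ ≤
        c * ∫ s in Set.Ioc (0 : ℝ) (t : ℝ), ((t : ℝ) - s) ^ (-α) *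
          sSup ((fun τ : Set.Icc (0 : ℝ) T => ‖ζ₁ τ - ζ₂ τ‖) ''
            {τ : Set.Icc (0 : ℝ) T | (τ : ℝ) ≤ s})) :
    ∃! ζ : C(Set.Icc (0 : ℝ) T, E), Φ ζ = ζ := by
  obtain ⟨hα0, hα1⟩ := hα
  set β : ℝ := 1 - α with hβdef
  have hβ0 : 0 < β := by simp only [hβdef]; linarith
  have hbase : 0 < β / (4 * (c + 1)) := by positivity
  set δ : ℝ := (β / (4 * (c + 1))) ^ (1 / β) with hδdef
  have hδ0 : 0 < δ := Real.rpow_pos_of_pos hbase _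
  have hδβ : δ ^ β = β / (4 * (c + 1)) := by
    rw [hδdef, ← Real.rpow_mul hbase.le, one_div, inv_mul_cancel₀ hβ0.ne', Real.rpow_one]
  set lam : ℝ := max 1 (4 * c * δ ^ (-α)) with hlamdef
  have hlam1 : (1 : ℝ) ≤ lam := le_max_left _ _
  have hlam0 : (0 : ℝ) < lam := lt_of_lt_of_le one_pos hlam1
  -- basic integrability facts
  have hrpow_int : ∀ a b : ℝ, IntervalIntegrable (fun u : ℝ => u ^ (-α)) volume a b :=
    fun a b => intervalIntegral.intervalIntegrable_rpow' (by linarith)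
  have hexp_cont : Continuous fun u : ℝ => Real.exp (-(lam * u)) :=
    Real.continuous_exp.comp (continuous_const.mul continuous_id).neg
  have hexp_int : ∀ a b : ℝ, IntervalIntegrable (fun u : ℝ => Real.exp (-(lam * u))) volume a b :=
    fun a b => hexp_cont.intervalIntegrable a b
  have hg_int : ∀ a b : ℝ,
      IntervalIntegrable (fun u : ℝ => u ^ (-α) * Real.exp (-(lam * u))) volume a b :=
    fun a b => (hrpow_int a b).mul_continuousOn hexp_cont.continuousOn
  -- antiderivative of the exponential
  have hexp_deriv : ∀ u : ℝ,
      HasDerivAt (fun v : ℝ => -Real.exp (-(lam * v)) / lam) (Real.exp (-(lam * u))) u := by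
    intro u
    have h1 : HasDerivAt (fun v : ℝ => -(lam * v)) (-lam) u := by
      exact ((hasDerivAt_id u).const_mul lam).neg.congr_deriv (by simp)
    have h2 : HasDerivAt (fun v : ℝ => Real.exp (-(lam * v)))
        (Real.exp (-(lam * u)) * -lam) u := (Real.hasDerivAt_exp _).comp u h1
    have h3 := (h2.div_const lam).neg
    have h4 : -(Real.exp (-(lam * u)) * -lam / lam) = Real.exp (-(lam * u)) := by
      field_simp
    rw [h4] at h3
    convert h3 using 2 with v
    case e'_8 => rw [neg_div]; rfl
    all_goals rfl
  have hexp_integral : ∀ a b : ℝ, (∫ u in a..b, Real.exp (-(lam * u)))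
      = -Real.exp (-(lam * b)) / lam - -Real.exp (-(lam * a)) / lam := fun a b =>
    intervalIntegral.integral_eq_sub_of_hasDerivAt (fun u _ => hexp_deriv u) (hexp_int a b)
  -- the key bound on the convolution integral
  have hJ : ∀ t : ℝ, 0 ≤ t →
      (∫ u in (0 : ℝ)..t, u ^ (-α) * Real.exp (-(lam * u))) ≤ δ ^ β / β + δ ^ (-α) / lam := by
    intro t ht
    set m := min δ t with hm
    have hm0 : 0 ≤ m := le_min hδ0.le ht
    have hmt : m ≤ t := min_le_right _ _
    have hsplit : (∫ u in (0 : ℝ)..t, u ^ (-α) * Real.exp (-(lam * u)))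
        = (∫ u in (0 : ℝ)..m, u ^ (-α) * Real.exp (-(lam * u)))
          + ∫ u in m..t, u ^ (-α) * Real.exp (-(lam * u)) :=
      (intervalIntegral.integral_add_adjacent_intervals (hg_int 0 m) (hg_int m t)).symm
    have h1 : (∫ u in (0 : ℝ)..m, u ^ (-α) * Real.exp (-(lam * u))) ≤ δ ^ β / β := by
      have hmono : (∫ u in (0 : ℝ)..m, u ^ (-α) * Real.exp (-(lam * u)))
          ≤ ∫ u in (0 : ℝ)..m, u ^ (-α) := by
        apply intervalIntegral.integral_mono_on hm0 (hg_int 0 m) (hrpow_int 0 m)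
        intro u hu
        have h5 : Real.exp (-(lam * u)) ≤ 1 :=
          Real.exp_le_one_iff.mpr (by nlinarith [hu.1])
        calc u ^ (-α) * Real.exp (-(lam * u)) ≤ u ^ (-α) * 1 :=
              mul_le_mul_of_nonneg_left h5 (Real.rpow_nonneg hu.1 _)
          _ = u ^ (-α) := mul_one _
      have hβeq : -α + 1 = β := by rw [hβdef]; ring
      have hcomp : (∫ u in (0 : ℝ)..m, u ^ (-α)) = (m ^ β - 0 ^ β) / β := by
        rw [integral_rpow (Or.inl (by linarith : (-1 : ℝ) < -α)), hβeq]
      have hmβ : m ^ β ≤ δ ^ β :=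
        Real.rpow_le_rpow hm0 (min_le_left _ _) hβ0.le
      have h0β : (0 : ℝ) ^ β = 0 := Real.zero_rpow hβ0.ne'
      calc (∫ u in (0 : ℝ)..m, u ^ (-α) * Real.exp (-(lam * u)))
          ≤ ∫ u in (0 : ℝ)..m, u ^ (-α) := hmono
        _ = (m ^ β - 0 ^ β) / β := hcomp
        _ ≤ δ ^ β / β := by rw [h0β, sub_zero]; gcongr
    have h2 : (∫ u in m..t, u ^ (-α) * Real.exp (-(lam * u))) ≤ δ ^ (-α) / lam := by
      rcases le_or_gt t δ with hcase | hcase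
      · have hmeq : m = t := min_eq_right hcase
        rw [hmeq, intervalIntegral.integral_same]
        positivity
      · have hmδ : m = δ := min_eq_left hcase.le
        rw [hmδ]
        have hmono : (∫ u in δ..t, u ^ (-α) * Real.exp (-(lam * u)))
            ≤ ∫ u in δ..t, δ ^ (-α) * Real.exp (-(lam * u)) := by
          apply intervalIntegral.integral_mono_on hcase.le (hg_int δ t)
            ((hexp_int δ t).const_mul _)
          intro u hu
          exact mul_le_mul_of_nonneg_right
            (Real.rpow_le_rpow_of_nonpos hδ0 hu.1 (by linarith)) (Real.exp_nonneg _)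
        refine hmono.trans ?_
        rw [intervalIntegral.integral_const_mul, hexp_integral]
        have he1 : Real.exp (-(lam * δ)) ≤ 1 :=
          Real.exp_le_one_iff.mpr (by nlinarith)
        have he2 : (0 : ℝ) < Real.exp (-(lam * t)) := Real.exp_pos _
        have hδα : (0 : ℝ) ≤ δ ^ (-α) := Real.rpow_nonneg hδ0.le _
        have key : -Real.exp (-(lam * t)) / lam - -Real.exp (-(lam * δ)) / lam ≤ 1 / lam := by
          rw [show -Real.exp (-(lam * t)) / lam - -Real.exp (-(lam * δ)) / lam
              = (Real.exp (-(lam * δ)) - Real.exp (-(lam * t))) / lam by ring]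
          gcongr
          linarith
        calc δ ^ (-α) * (-Real.exp (-(lam * t)) / lam - -Real.exp (-(lam * δ)) / lam)
            ≤ δ ^ (-α) * (1 / lam) := mul_le_mul_of_nonneg_left key hδα
          _ = δ ^ (-α) / lam := by ring
    rw [hsplit]
    exact add_le_add h1 h2
  -- the kernel estimate
  have hker : ∀ t : ℝ, 0 ≤ t →
      c * (∫ s in Ioc (0 : ℝ) t, (t - s) ^ (-α) * Real.exp (lam * s))
        ≤ 1 / 2 * Real.exp (lam * t) := by
    intro t ht
    have hcJ : c * (∫ u in (0 : ℝ)..t, u ^ (-α) * Real.exp (-(lam * u))) ≤ 1 / 2 := by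
      have hc1 : c * (δ ^ β / β) ≤ 1 / 4 := by
        rw [hδβ, show c * (β / (4 * (c + 1)) / β) = c / (4 * (c + 1)) by field_simp,
          div_le_iff₀ (by positivity : (0 : ℝ) < 4 * (c + 1))]
        linarith
      have hc2 : c * (δ ^ (-α) / lam) ≤ 1 / 4 := by
        rw [show c * (δ ^ (-α) / lam) = c * δ ^ (-α) / lam by ring,
          div_le_iff₀ hlam0]
        have h4 : 4 * c * δ ^ (-α) ≤ lam := le_max_right _ _
        nlinarith [Real.rpow_nonneg hδ0.le (-α)]
      have := mul_le_mul_of_nonneg_left (hJ t ht) hc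
      nlinarith
    have heq1 : ∀ s : ℝ, (t - s) ^ (-α) * Real.exp (lam * s)
        = Real.exp (lam * t) * ((t - s) ^ (-α) * Real.exp (-(lam * (t - s)))) := by
      intro s
      rw [show Real.exp (lam * t) * ((t - s) ^ (-α) * Real.exp (-(lam * (t - s))))
          = (t - s) ^ (-α) * (Real.exp (lam * t) * Real.exp (-(lam * (t - s)))) by ring,
        ← Real.exp_add]
      congr 2
      ring
    have hsub : (∫ s in (0 : ℝ)..t, (t - s) ^ (-α) * Real.exp (-(lam * (t - s))))
        = ∫ u in (0 : ℝ)..t, u ^ (-α) * Real.exp (-(lam * u)) := by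
      simpa using intervalIntegral.integral_comp_sub_left
        (a := 0) (b := t) (fun u : ℝ => u ^ (-α) * Real.exp (-(lam * u))) t
    calc c * (∫ s in Ioc (0 : ℝ) t, (t - s) ^ (-α) * Real.exp (lam * s))
        = c * ∫ s in Ioc (0 : ℝ) t,
            Real.exp (lam * t) * ((t - s) ^ (-α) * Real.exp (-(lam * (t - s)))) := by
          simp_rw [heq1]
      _ = c * (Real.exp (lam * t)
            * ∫ s in Ioc (0 : ℝ) t, (t - s) ^ (-α) * Real.exp (-(lam * (t - s)))) := by
          rw [integral_const_mul]
      _ = Real.exp (lam * t)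
            * (c * ∫ s in (0 : ℝ)..t, (t - s) ^ (-α) * Real.exp (-(lam * (t - s)))) := by
          rw [intervalIntegral.integral_of_le ht]; ring
      _ = Real.exp (lam * t)
            * (c * ∫ u in (0 : ℝ)..t, u ^ (-α) * Real.exp (-(lam * u))) := by rw [hsub]
      _ ≤ Real.exp (lam * t) * (1 / 2) :=
          mul_le_mul_of_nonneg_left hcJ (Real.exp_nonneg _)
      _ = 1 / 2 * Real.exp (lam * t) := by ring
  -- one application of Φ halves a weighted bound
  have step : ∀ K : ℝ, 0 ≤ K → ∀ ζ₁ ζ₂ : C(Icc (0 : ℝ) T, E),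
      (∀ τ : Icc (0 : ℝ) T, ‖ζ₁ τ - ζ₂ τ‖ ≤ K * Real.exp (lam * τ)) →
      ∀ t : Icc (0 : ℝ) T, ‖Φ ζ₁ t - Φ ζ₂ t‖ ≤ 1 / 2 * K * Real.exp (lam * t) := by
    intro K hK ζ₁ ζ₂ H t
    have ht0 : (0 : ℝ) ≤ (t : ℝ) := t.2.1
    have hint : IntegrableOn (fun s => ((t : ℝ) - s) ^ (-α) * (K * Real.exp (lam * s)))
        (Ioc 0 (t : ℝ)) volume := by
      have h1 : IntervalIntegrable (fun s : ℝ => ((t : ℝ) - s) ^ (-α)) volume 0 (t : ℝ) := by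
        simpa using ((hrpow_int 0 (t : ℝ)).comp_sub_left (t : ℝ)).symm
      have h2 := h1.mul_continuousOn
        (g := fun s => K * Real.exp (lam * s))
        ((continuous_const.mul (Real.continuous_exp.comp
          (continuous_const.mul continuous_id))).continuousOn)
      exact (intervalIntegrable_iff_integrableOn_Ioc_of_le ht0).mp h2
    have hmono : (∫ s in Ioc (0 : ℝ) (t : ℝ), ((t : ℝ) - s) ^ (-α) *
          sSup ((fun τ : Icc (0 : ℝ) T => ‖ζ₁ τ - ζ₂ τ‖) ''
            {τ : Icc (0 : ℝ) T | (τ : ℝ) ≤ s}))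
        ≤ ∫ s in Ioc (0 : ℝ) (t : ℝ), ((t : ℝ) - s) ^ (-α) * (K * Real.exp (lam * s)) := by
      refine integral_mono_of_nonneg ?_ hint ?_
      · filter_upwards [ae_restrict_mem measurableSet_Ioc] with s hs
        have h0 : (0 : ℝ) ≤ (t : ℝ) - s := by linarith [hs.2]
        exact mul_nonneg (Real.rpow_nonneg h0 _)
          (Real.sSup_nonneg fun x hx => by
            obtain ⟨τ, _, rfl⟩ := hx; exact norm_nonneg _)
      · filter_upwards [ae_restrict_mem measurableSet_Ioc] with s hs
        have h0 : (0 : ℝ) ≤ (t : ℝ) - s := by linarith [hs.2]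
        refine mul_le_mul_of_nonneg_left ?_ (Real.rpow_nonneg h0 _)
        refine Real.sSup_le ?_ (by positivity)
        rintro x ⟨τ, hτ, rfl⟩
        calc ‖ζ₁ τ - ζ₂ τ‖ ≤ K * Real.exp (lam * τ) := H τ
          _ ≤ K * Real.exp (lam * s) := by
              refine mul_le_mul_of_nonneg_left ?_ hK
              exact Real.exp_le_exp.mpr (mul_le_mul_of_nonneg_left hτ hlam0.le)
    calc ‖Φ ζ₁ t - Φ ζ₂ t‖
        ≤ c * ∫ s in Ioc (0 : ℝ) (t : ℝ), ((t : ℝ) - s) ^ (-α) *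
            sSup ((fun τ : Icc (0 : ℝ) T => ‖ζ₁ τ - ζ₂ τ‖) ''
              {τ : Icc (0 : ℝ) T | (τ : ℝ) ≤ s}) := hΦ ζ₁ ζ₂ t
      _ ≤ c * ∫ s in Ioc (0 : ℝ) (t : ℝ),
            ((t : ℝ) - s) ^ (-α) * (K * Real.exp (lam * s)) :=
          mul_le_mul_of_nonneg_left hmono hc
      _ = K * (c * ∫ s in Ioc (0 : ℝ) (t : ℝ), ((t : ℝ) - s) ^ (-α) * Real.exp (lam * s)) := by
          rw [show (fun s => ((t : ℝ) - s) ^ (-α) * (K * Real.exp (lam * s)))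
              = fun s => K * (((t : ℝ) - s) ^ (-α) * Real.exp (lam * s)) from
            funext fun s => by ring, integral_const_mul]
          ring
      _ ≤ K * (1 / 2 * Real.exp (lam * t)) :=
          mul_le_mul_of_nonneg_left (hker (t : ℝ) ht0) hK
      _ = 1 / 2 * K * Real.exp (lam * t) := by ring
  -- iterate the estimate
  have iter : ∀ (n : ℕ) (ζ₁ ζ₂ : C(Icc (0 : ℝ) T, E)) (t : Icc (0 : ℝ) T),
      ‖(Φ^[n] ζ₁) t - (Φ^[n] ζ₂) t‖ ≤ (1 / 2) ^ n * dist ζ₁ ζ₂ * Real.exp (lam * t) := by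
    intro n
    induction n with
    | zero =>
      intro ζ₁ ζ₂ t
      simp only [Function.iterate_zero_apply, pow_zero, one_mul]
      calc ‖ζ₁ t - ζ₂ t‖ = dist (ζ₁ t) (ζ₂ t) := (dist_eq_norm _ _).symm
        _ ≤ dist ζ₁ ζ₂ := ContinuousMap.dist_apply_le_dist t
        _ ≤ dist ζ₁ ζ₂ * Real.exp (lam * t) :=
            le_mul_of_one_le_right dist_nonneg
              (Real.one_le_exp (mul_nonneg hlam0.le t.2.1))
    | succ n ih =>
      intro ζ₁ ζ₂ t
      have hK : (0 : ℝ) ≤ (1 / 2) ^ n * dist ζ₁ ζ₂ := by positivity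
      have h := step _ hK (Φ^[n] ζ₁) (Φ^[n] ζ₂) (fun τ => ih ζ₁ ζ₂ τ) t
      rw [Function.iterate_succ_apply', Function.iterate_succ_apply']
      refine h.trans_eq ?_
      ring
  -- Φ^[n] is a contraction for large n
  haveI : Nonempty C(Icc (0 : ℝ) T, E) := ⟨0⟩
  obtain ⟨n, hn⟩ : ∃ n : ℕ, (1 / 2 : ℝ) ^ n < Real.exp (-(lam * T)) :=
    exists_pow_lt_of_lt_one (Real.exp_pos _) (by norm_num)
  set q : ℝ := (1 / 2) ^ n * Real.exp (lam * T) with hq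
  have hq0 : (0 : ℝ) ≤ q := by positivity
  have hq1 : q < 1 := by
    have h := mul_lt_mul_of_pos_right hn (Real.exp_pos (lam * T))
    rwa [← Real.exp_add, neg_add_cancel, Real.exp_zero] at h
  have hlip : LipschitzWith ⟨q, hq0⟩ (Φ^[n]) := by
    refine LipschitzWith.of_dist_le_mul fun ζ₁ ζ₂ => ?_
    show dist (Φ^[n] ζ₁) (Φ^[n] ζ₂) ≤ q * dist ζ₁ ζ₂
    rw [ContinuousMap.dist_le (by positivity)]
    intro x
    rw [dist_eq_norm]
    calc ‖(Φ^[n] ζ₁) x - (Φ^[n] ζ₂) x‖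
        ≤ (1 / 2) ^ n * dist ζ₁ ζ₂ * Real.exp (lam * x) := iter n ζ₁ ζ₂ x
      _ ≤ (1 / 2) ^ n * dist ζ₁ ζ₂ * Real.exp (lam * T) := by
          refine mul_le_mul_of_nonneg_left ?_ (by positivity)
          exact Real.exp_le_exp.mpr (mul_le_mul_of_nonneg_left x.2.2 hlam0.le)
      _ = q * dist ζ₁ ζ₂ := by rw [hq]; ring
  have hcontr : ContractingWith ⟨q, hq0⟩ (Φ^[n]) :=
    ⟨by exact_mod_cast hq1, hlip⟩
  have hfix : Function.IsFixedPt Φ (hcontr.fixedPoint (Φ^[n])) :=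
    hcontr.isFixedPt_fixedPoint_iterate
  refine ⟨hcontr.fixedPoint (Φ^[n]), hfix, ?_⟩
  intro y hy
  have hyn : Function.IsFixedPt (Φ^[n]) y := Function.IsFixedPt.iterate hy n
  exact hcontr.fixedPoint_unique hyn
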